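/- Let M be a finite unitary magma and A an associative algebra equipped with linear maps ω_x : A → A for each x ∈ M such that ω_1 = id and ω_x ∘ ω_y = ω_{x⋆y}. Define, for each M-triangle p = (p₀,p₁,p₂) ∈ M³, the binary operation a₁ *_p a₂ := ω_{p₀}(ω_{p₁}(a₁) · ω_{p₂}(a₂)). Then these operations satisfy: (1) (a₁ *_q a₂) *_p a₃ = (a₁ *_{q'} a₂) *_{p'} a₃ whenever p₁ ⋆ q₀ = p'₁ ⋆ q'₀ and the other components of p,q match those of p',q'; (2) (a₁ *_q a₂) *_p a₃ = a₁ *_r (a₂ *_s a₃) whenever p₁ ⋆ q₀ = 1 = r₂ ⋆ s₀, r₀ = p₀, r₁ = q₁, s₁ = q₂, s₂ = p₂; (3) a₁ *_p (a₂ *_q a₃) = a₁ *_{p'} (a₂ *_{q'} a₃) whenever p₂ ⋆ q₀ = p'₂ ⋆ q'₀ and the other components match. -/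
import Mathlib

lemma omega_app_comp {K M A : Type} [CommSemiring K] [NonUnitalSemiring A] [Module K A]
    [Mul M] (ω : M → A →ₗ[K] A) (hcomp : ∀ x y : M, ω x ∘ₗ ω y = ω (x * y))
    (x y : M) (a : A) : ω x (ω y a) = ω (x * y) a := by
  rw [← hcomp]; rfl

/-- Let `M` be a finite unitary magma and `A` an associative algebra over `K`
equipped with linear maps `ω_x : A → A`, `x ∈ M`, such that `ω_1 = id` and
`ω_x ∘ ω_y = ω_{x ⋆ y}` (an `M`-compatible associative algebra).  The binary
operations `a₁ *_p a₂ := ω_{p₀}(ω_{p₁}(a₁) ⬝ ω_{p₂}(a₂))`, for `M`-triangles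
`p = (p₀, p₁, p₂) ∈ M³`, satisfy the three defining relations of algebras over
the noncrossing clique operad `NC M`. -/
theorem compatible_algebra_is_NCM_algebra (K : Type) [CommSemiring K]
    (M : Type) [Fintype M] [MulOneClass M]
    (A : Type) [NonUnitalSemiring A] [Module K A]
    [SMulCommClass K A A] [IsScalarTower K A A]
    (ω : M → A →ₗ[K] A)
    (hone : ω 1 = LinearMap.id)
    (hcomp : ∀ x y : M, ω x ∘ₗ ω y = ω (x * y)) :
    (∀ (p₀ p₁ p₂ q₀ q₁ q₂ r₀ r₁ : M) (a₁ a₂ a₃ : A), p₁ * q₀ = r₁ * r₀ →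
        ω p₀ (ω p₁ (ω q₀ (ω q₁ a₁ * ω q₂ a₂)) * ω p₂ a₃) =
          ω p₀ (ω r₁ (ω r₀ (ω q₁ a₁ * ω q₂ a₂)) * ω p₂ a₃)) ∧
    (∀ (p₀ p₁ p₂ q₀ q₁ q₂ r₀ r₂ : M) (a₁ a₂ a₃ : A), p₁ * q₀ = 1 → r₂ * r₀ = 1 →
        ω p₀ (ω p₁ (ω q₀ (ω q₁ a₁ * ω q₂ a₂)) * ω p₂ a₃) =
          ω p₀ (ω q₁ a₁ * ω r₂ (ω r₀ (ω q₂ a₂ * ω p₂ a₃)))) ∧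
    (∀ (p₀ p₁ p₂ q₀ q₁ q₂ r₀ r₂ : M) (a₁ a₂ a₃ : A), p₂ * q₀ = r₂ * r₀ →
        ω p₀ (ω p₁ a₁ * ω p₂ (ω q₀ (ω q₁ a₂ * ω q₂ a₃))) =
          ω p₀ (ω p₁ a₁ * ω r₂ (ω r₀ (ω q₁ a₂ * ω q₂ a₃)))) := by
  refine ⟨fun p₀ p₁ p₂ q₀ q₁ q₂ r₀ r₁ a₁ a₂ a₃ h => ?_,
    fun p₀ p₁ p₂ q₀ q₁ q₂ r₀ r₂ a₁ a₂ a₃ h₁ h₂ => ?_,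
    fun p₀ p₁ p₂ q₀ q₁ q₂ r₀ r₂ a₁ a₂ a₃ h => ?_⟩
  · rw [omega_app_comp ω hcomp, omega_app_comp ω hcomp, h]
  · rw [omega_app_comp ω hcomp, omega_app_comp ω hcomp, h₁, h₂, hone]
    simp [mul_assoc]
  · rw [omega_app_comp ω hcomp, omega_app_comp ω hcomp, h]
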